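/- For every integer n ≥ 0, the polynomial identity Cat(B_n; q) = Cat⁺⁺(B_n; q) + (1+q)·Σ_{i=0}^{n−1} Cat⁺⁺(A_i; q)·Cat(B_{n−i−1}; q) holds. -/

import Mathlib

open Polynomial

/-- A positive root of type Aₙ: an interval `[i, j]` with `1 ≤ i ≤ j ≤ n`. -/
def ARoot (n : ℕ) : Type := {p : ℕ × ℕ // 1 ≤ p.1 ∧ p.1 ≤ p.2 ∧ p.2 ≤ n}

/-- The root poset order of type Aₙ: containment of intervals. -/
def aLe (n : ℕ) (x y : ARoot n) : Prop := y.1.1 ≤ x.1.1 ∧ x.1.2 ≤ y.1.2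

/-- `x` is a simple root of type Aₙ: a singleton interval. -/
def aSimple (n : ℕ) (x : ARoot n) : Prop := x.1.1 = x.1.2

/-- A set `A` of type-Aₙ roots has full support: the union of its intervals is `{1, …, n}`. -/
def aFullSupport (n : ℕ) (A : Finset (ARoot n)) : Prop :=
  ∀ m : ℕ, 1 ≤ m → m ≤ n → ∃ x ∈ A, x.1.1 ≤ m ∧ m ≤ x.1.2

/-- `Cat⁺⁺(Aₙ; q) = Σ_A q^|A|`, the sum over antichains `A` in the root poset of type Aₙ
that contain no simple root and have full support. -/
noncomputable def CatppA (n : ℕ) : Polynomial ℚ :=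
  ∑ᶠ A ∈ {A : Finset (ARoot n) | IsAntichain (aLe n) (A : Set (ARoot n)) ∧
      (∀ x ∈ A, ¬ aSimple n x) ∧ aFullSupport n A}, X ^ A.card

/-- The `i`-th standard basis vector of `ℤⁿ`. -/
def ev (n : ℕ) (i : Fin n) : Fin n → ℤ := Pi.single i 1

/-- The simple roots of type Bₙ (0-indexed): `αᵢ = eᵢ - eᵢ₊₁` for `i < n-1`, and
`α_{n-1} = e_{n-1}`. -/
def simpleB (n : ℕ) (i : Fin n) : Fin n → ℤ :=
  if h : (i : ℕ) + 1 < n then ev n i - ev n ⟨(i : ℕ) + 1, h⟩ else ev n i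

/-- A positive root of type Bₙ: `eᵢ`, or `eᵢ - eⱼ` or `eᵢ + eⱼ` for `i < j`. -/
def BRoot (n : ℕ) : Type :=
  {v : Fin n → ℤ //
    (∃ i, v = ev n i) ∨ ∃ i j : Fin n, i < j ∧ (v = ev n i - ev n j ∨ v = ev n i + ev n j)}

/-- The root poset order of type Bₙ: `x ≤ y` iff `y - x` is a nonnegative integer
combination of the simple roots. -/
def bLe (n : ℕ) (x y : BRoot n) : Prop :=
  ∃ c : Fin n → ℕ, y.1 - x.1 = ∑ i, (c i : ℤ) • simpleB n i

/-- `x` is a simple root of type Bₙ. -/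
def bSimple (n : ℕ) (x : BRoot n) : Prop := ∃ i, x.1 = simpleB n i

/-- A set `A` of type-Bₙ roots has full support: every simple root appears with nonzero
coefficient in the expansion (in the basis of simple roots) of some element of `A`. -/
def bFullSupport (n : ℕ) (A : Finset (BRoot n)) : Prop :=
  ∀ i : Fin n, ∃ x ∈ A, ∃ c : Fin n → ℤ, x.1 = ∑ j, c j • simpleB n j ∧ c i ≠ 0

/-- `Cat(Bₙ; q) = Σ_A q^|A|`, the sum over all antichains `A` in the root poset of
type Bₙ. -/
noncomputable def CatB (n : ℕ) : Polynomial ℚ :=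
  ∑ᶠ A ∈ {A : Finset (BRoot n) | IsAntichain (bLe n) (A : Set (BRoot n))}, X ^ A.card

/-- `Cat⁺⁺(Bₙ; q) = Σ_A q^|A|`, the sum over antichains `A` in the root poset of type Bₙ
that contain no simple root and have full support. -/
noncomputable def CatppB (n : ℕ) : Polynomial ℚ :=
  ∑ᶠ A ∈ {A : Finset (BRoot n) | IsAntichain (bLe n) (A : Set (BRoot n)) ∧
      (∀ x ∈ A, ¬ bSimple n x) ∧ bFullSupport n A}, X ^ A.card

/-! ### Auxiliary infrastructure -/

section Infra

instance instDecEqARoot (n : ℕ) : DecidableEq (ARoot n) := by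
  unfold ARoot; infer_instance

instance instDecEqBRoot (n : ℕ) : DecidableEq (BRoot n) := by
  unfold BRoot; infer_instance

noncomputable instance instFintypeARoot (n : ℕ) : Fintype (ARoot n) :=
  Fintype.ofInjective
    (fun r : ARoot n => ((⟨r.1.1, by have := r.2; omega⟩ : Fin (n+1)),
      (⟨r.1.2, by have := r.2; omega⟩ : Fin (n+1))))
    (by
      intro a b h
      simp only [Prod.mk.injEq, Fin.mk.injEq] at h
      exact Subtype.ext (Prod.ext h.1 h.2))

noncomputable instance instFintypeBRoot (n : ℕ) : Fintype (BRoot n) :=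
  Fintype.ofSurjective
    (fun z : Fin n ⊕ (Fin n × Fin n) × Bool =>
      match z with
      | Sum.inl i => (⟨ev n i, Or.inl ⟨i, rfl⟩⟩ : BRoot n)
      | Sum.inr ⟨⟨i, j⟩, s⟩ =>
        if h : i < j then
          if s then ⟨ev n i + ev n j, Or.inr ⟨i, j, h, Or.inr rfl⟩⟩
          else ⟨ev n i - ev n j, Or.inr ⟨i, j, h, Or.inl rfl⟩⟩
        else ⟨ev n i, Or.inl ⟨i, rfl⟩⟩)
    (by
      rintro ⟨v, hv⟩
      rcases hv with ⟨i, rfl⟩ | ⟨i, j, hij, rfl | rfl⟩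
      · exact ⟨Sum.inl i, rfl⟩
      · exact ⟨Sum.inr ⟨⟨i, j⟩, false⟩, by simp [hij]; rfl⟩
      · exact ⟨Sum.inr ⟨⟨i, j⟩, true⟩, by simp [hij]; rfl⟩)

variable {n : ℕ}

/-- Extension of a vector on `Fin n` to `ℕ` by zero. -/
def vext (n : ℕ) (v : Fin n → ℤ) (k : ℕ) : ℤ := if h : k < n then v ⟨k, h⟩ else 0

/-- Cumulative sums: the coefficient of `αⱼ` in the expansion of `v`. -/
def cw (n : ℕ) (v : Fin n → ℤ) (j : ℕ) : ℤ := ∑ k ∈ Finset.range (j+1), vext n v k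

/-- Coefficient vector of a root of type `Bₙ` in the basis of simple roots. -/
def cv {n : ℕ} (x : BRoot n) (j : ℕ) : ℤ := cw n x.1 j

lemma vext_lt {v : Fin n → ℤ} {k : ℕ} (h : k < n) : vext n v k = v ⟨k, h⟩ := dif_pos h

lemma vext_ge {v : Fin n → ℤ} {k : ℕ} (h : n ≤ k) : vext n v k = 0 := dif_neg (by omega)

lemma vext_sub (u v : Fin n → ℤ) (k : ℕ) :
    vext n (u - v) k = vext n u k - vext n v k := by
  unfold vext; split <;> simp

lemma vext_add (u v : Fin n → ℤ) (k : ℕ) :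
    vext n (u + v) k = vext n u k + vext n v k := by
  unfold vext; split <;> simp

lemma cw_sub (u v : Fin n → ℤ) (j : ℕ) : cw n (u - v) j = cw n u j - cw n v j := by
  unfold cw
  rw [← Finset.sum_sub_distrib]
  exact Finset.sum_congr rfl fun k _ => vext_sub u v k

lemma cw_add (u v : Fin n → ℤ) (j : ℕ) : cw n (u + v) j = cw n u j + cw n v j := by
  unfold cw
  rw [← Finset.sum_add_distrib]
  exact Finset.sum_congr rfl fun k _ => vext_add u v k

lemma vext_ev (a : Fin n) (k : ℕ) : vext n (ev n a) k = if k = (a : ℕ) then 1 else 0 := by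
  unfold vext
  split
  · rename_i h
    rw [ev, Pi.single_apply]
    simp [Fin.ext_iff]
  · rename_i h
    have := a.isLt
    rw [if_neg (by omega)]

lemma cw_ev (a : Fin n) (j : ℕ) : cw n (ev n a) j = if (a : ℕ) ≤ j then 1 else 0 := by
  induction j with
  | zero =>
    unfold cw
    rw [Finset.sum_range_one, vext_ev]
    split_ifs <;> omega
  | succ j ih =>
    unfold cw at ih ⊢
    rw [Finset.sum_range_succ, ih, vext_ev]
    split_ifs <;> omega

lemma simpleB_apply (i : Fin n) (k : ℕ) (hk : k < n) :
    simpleB n i ⟨k, hk⟩ = (if (i : ℕ) = k then 1 else 0) - (if (i : ℕ) + 1 = k then 1 else 0) := by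
  unfold simpleB
  split
  · rename_i h
    rw [Pi.sub_apply, ev, ev, Pi.single_apply, Pi.single_apply]
    have : ((⟨k, hk⟩ : Fin n) = i) ↔ ((i : ℕ) = k) := by
      simp only [Fin.ext_iff, Fin.val_mk]; omega
    have h2 : ((⟨k, hk⟩ : Fin n) = (⟨(i : ℕ) + 1, h⟩ : Fin n)) ↔ ((i : ℕ) + 1 = k) := by
      simp only [Fin.ext_iff, Fin.val_mk]; omega
    rw [if_congr this rfl rfl, if_congr h2 rfl rfl]
  · rename_i h
    have hi := i.isLt
    rw [ev, Pi.single_apply, if_neg (by omega : ¬ (i : ℕ) + 1 = k)]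
    have : ((⟨k, hk⟩ : Fin n) = i) ↔ ((i : ℕ) = k) := by
      simp only [Fin.ext_iff, Fin.val_mk]; omega
    rw [if_congr this rfl rfl, sub_zero]

lemma vext_sum (c : Fin n → ℤ) (k : ℕ) (hk : k < n) :
    vext n (∑ i, c i • simpleB n i) k
      = c ⟨k, hk⟩ - (if h : 1 ≤ k then c ⟨k - 1, by omega⟩ else 0) := by
  rw [vext_lt hk, Finset.sum_apply]
  simp only [Pi.smul_apply, smul_eq_mul]
  have : ∀ i : Fin n, c i * simpleB n i ⟨k, hk⟩
      = (if i = ⟨k, hk⟩ then c i else 0)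
        - (if h : 1 ≤ k then (if i = ⟨k - 1, by omega⟩ then c i else 0) else 0) := by
    intro i
    rw [simpleB_apply i k hk, mul_sub]
    congr 1
    · by_cases h : i = ⟨k, hk⟩
      · subst h; simp
      · rw [if_neg h, if_neg (by simpa [Fin.ext_iff] using h), mul_zero]
    · by_cases h1 : 1 ≤ k
      · rw [dif_pos h1]
        by_cases h : i = (⟨k - 1, by omega⟩ : Fin n)
        · rw [if_pos h, if_pos (by simp [h]; omega), mul_one]
        · rw [if_neg h, if_neg (by simp only [Fin.ext_iff] at h ⊢; omega), mul_zero]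
      · rw [dif_neg h1, if_neg (by omega), mul_zero]
  rw [Finset.sum_congr rfl fun i _ => this i, Finset.sum_sub_distrib]
  congr 1
  · rw [Finset.sum_ite_eq' Finset.univ (⟨k, hk⟩ : Fin n) c, if_pos (Finset.mem_univ _)]
  · by_cases h1 : 1 ≤ k
    · simp only [dif_pos h1]
      rw [Finset.sum_ite_eq' Finset.univ (⟨k - 1, by omega⟩ : Fin n) c,
        if_pos (Finset.mem_univ _)]
    · simp only [dif_neg h1, Finset.sum_const_zero]

lemma cw_sum (c : Fin n → ℤ) (j : ℕ) (hj : j < n) :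
    cw n (∑ i, c i • simpleB n i) j = c ⟨j, hj⟩ := by
  induction j with
  | zero =>
    unfold cw
    rw [Finset.sum_range_one, vext_sum c 0 hj]
    simp
  | succ j ih =>
    unfold cw at ih ⊢
    rw [Finset.sum_range_succ, ih (by omega), vext_sum c (j+1) hj]
    simp

end Infra
section Repr
variable {n : ℕ}

lemma step_repr (a : Fin n) :
    ev n a = ∑ i : Fin n, (if (a : ℕ) ≤ (i : ℕ) then (1:ℤ) else 0) • simpleB n i := by
  set c : Fin n → ℤ := fun i => if (a : ℕ) ≤ (i : ℕ) then (1:ℤ) else 0 with hc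
  funext j
  rcases j with ⟨k, hk⟩
  have h1 := vext_sum c k hk
  rw [vext_lt hk] at h1
  rw [h1, ev, Pi.single_apply]
  have ha := a.isLt
  simp only [hc, Fin.val_mk, Fin.ext_iff]
  split_ifs <;> omega

lemma cv_of_ev {x : BRoot n} {a : Fin n} (h : x.1 = ev n a) (j : ℕ) :
    cv x j = if (a : ℕ) ≤ j then 1 else 0 := by
  rw [cv, h, cw_ev]

lemma cv_of_sub {x : BRoot n} {a b : Fin n} (h : x.1 = ev n a - ev n b) (j : ℕ) :
    cv x j = (if (a : ℕ) ≤ j then 1 else 0) - (if (b : ℕ) ≤ j then 1 else 0) := by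
  rw [cv, h, cw_sub, cw_ev, cw_ev]

lemma cv_of_sub' {x : BRoot n} {a b : Fin n} (hab : a < b) (h : x.1 = ev n a - ev n b)
    (j : ℕ) : cv x j = if (a : ℕ) ≤ j ∧ j < (b : ℕ) then 1 else 0 := by
  rw [cv_of_sub h]
  have hab' : (a : ℕ) < (b : ℕ) := hab
  split_ifs <;> omega

lemma cv_of_add {x : BRoot n} {a b : Fin n} (h : x.1 = ev n a + ev n b) (j : ℕ) :
    cv x j = (if (a : ℕ) ≤ j then 1 else 0) + (if (b : ℕ) ≤ j then 1 else 0) := by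
  rw [cv, h, cw_add, cw_ev, cw_ev]

lemma root_repr (x : BRoot n) : x.1 = ∑ i : Fin n, cv x (i : ℕ) • simpleB n i := by
  rcases x.2 with ⟨a, h⟩ | ⟨a, b, hab, h | h⟩
  · calc x.1 = ev n a := h
    _ = ∑ i : Fin n, (if (a : ℕ) ≤ (i : ℕ) then (1:ℤ) else 0) • simpleB n i := step_repr a
    _ = ∑ i : Fin n, cv x (i : ℕ) • simpleB n i :=
        Finset.sum_congr rfl fun i _ => by rw [cv_of_ev h]
  · calc x.1 = ev n a - ev n b := h
    _ = ∑ i : Fin n, ((if (a : ℕ) ≤ (i : ℕ) then (1:ℤ) else 0)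
          - (if (b : ℕ) ≤ (i : ℕ) then 1 else 0)) • simpleB n i := by
        rw [step_repr a, step_repr b, ← Finset.sum_sub_distrib]
        exact Finset.sum_congr rfl fun i _ => (sub_smul _ _ _).symm
    _ = ∑ i : Fin n, cv x (i : ℕ) • simpleB n i :=
        Finset.sum_congr rfl fun i _ => by rw [cv_of_sub h]
  · calc x.1 = ev n a + ev n b := h
    _ = ∑ i : Fin n, ((if (a : ℕ) ≤ (i : ℕ) then (1:ℤ) else 0)
          + (if (b : ℕ) ≤ (i : ℕ) then 1 else 0)) • simpleB n i := by
        rw [step_repr a, step_repr b, ← Finset.sum_add_distrib]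
        exact Finset.sum_congr rfl fun i _ => (add_smul _ _ _).symm
    _ = ∑ i : Fin n, cv x (i : ℕ) • simpleB n i :=
        Finset.sum_congr rfl fun i _ => by rw [cv_of_add h]

lemma cv_eq_of_repr {x : BRoot n} {c : Fin n → ℤ} (h : x.1 = ∑ i, c i • simpleB n i)
    (i : Fin n) : cv x (i : ℕ) = c i := by
  rw [cv, h, cw_sum c i.1 i.isLt]

lemma breq_iff {x y : BRoot n} : x = y ↔ ∀ j < n, cv x j = cv y j := by
  constructor
  · rintro rfl j _; rfl
  · intro h
    apply Subtype.ext
    rw [root_repr x, root_repr y]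
    exact Finset.sum_congr rfl fun i _ => by rw [h i i.isLt]

lemma bLe_iff {x y : BRoot n} : bLe n x y ↔ ∀ j < n, cv x j ≤ cv y j := by
  constructor
  · rintro ⟨c, hc⟩ j hj
    have h1 : cw n (y.1 - x.1) j = (c ⟨j, hj⟩ : ℤ) := by
      rw [hc]; exact cw_sum _ j hj
    rw [cw_sub] at h1
    unfold cv
    omega
  · intro h
    refine ⟨fun i => (cv y (i : ℕ) - cv x (i : ℕ)).toNat, ?_⟩
    have hrep : ∀ i : Fin n, (((cv y (i : ℕ) - cv x (i : ℕ)).toNat : ℕ) : ℤ)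
        = cv y (i : ℕ) - cv x (i : ℕ) := fun i =>
      Int.toNat_of_nonneg (by have := h (i : ℕ) i.isLt; omega)
    calc y.1 - x.1 = ∑ i : Fin n, (cv y (i : ℕ) - cv x (i : ℕ)) • simpleB n i := by
          rw [root_repr x, root_repr y, ← Finset.sum_sub_distrib]
          exact Finset.sum_congr rfl fun i _ => (sub_smul _ _ _).symm
      _ = ∑ i : Fin n, (((cv y (i : ℕ) - cv x (i : ℕ)).toNat : ℕ) : ℤ) • simpleB n i :=
          Finset.sum_congr rfl fun i _ => by rw [hrep i]

lemma not_bLe {x y : BRoot n} {j : ℕ} (hj : j < n) (h : ¬ cv x j ≤ cv y j) :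
    ¬ bLe n x y := fun hle => h (bLe_iff.mp hle j hj)

lemma cv_nonneg (x : BRoot n) (j : ℕ) : 0 ≤ cv x j := by
  rcases x.2 with ⟨a, h⟩ | ⟨a, b, hab, h | h⟩
  · rw [cv_of_ev h]; split_ifs <;> omega
  · have hab' : (a : ℕ) < (b : ℕ) := hab
    rw [cv_of_sub h]; split_ifs <;> omega
  · rw [cv_of_add h]; split_ifs <;> omega

lemma cv_exists (x : BRoot n) : ∃ j, j < n ∧ cv x j ≠ 0 := by
  rcases x.2 with ⟨a, h⟩ | ⟨a, b, hab, h | h⟩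
  · exact ⟨a, a.isLt, by rw [cv_of_ev h, if_pos le_rfl]; norm_num⟩
  · have hab' : (a : ℕ) < (b : ℕ) := hab
    exact ⟨a, a.isLt, by rw [cv_of_sub' hab h, if_pos ⟨le_rfl, hab'⟩]; norm_num⟩
  · refine ⟨a, a.isLt, ?_⟩
    rw [cv_of_add h, if_pos le_rfl]
    split_ifs <;> omega

def bsimpleRoot (n : ℕ) (i : Fin n) : BRoot n :=
  ⟨simpleB n i, by
    unfold simpleB
    split
    · rename_i h
      exact Or.inr ⟨i, ⟨(i : ℕ) + 1, h⟩, by rw [Fin.lt_def]; simp, Or.inl rfl⟩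
    · exact Or.inl ⟨i, rfl⟩⟩

lemma cv_bsimpleRoot (i : Fin n) (j : ℕ) (hj : j < n) :
    cv (bsimpleRoot n i) j = if j = (i : ℕ) then 1 else 0 := by
  have h : (bsimpleRoot n i).1 = simpleB n i := rfl
  unfold simpleB at h
  split at h
  · rename_i hlt
    rw [cv_of_sub h]
    simp only [Fin.val_mk]
    split_ifs <;> omega
  · rename_i hlt
    rw [cv_of_ev h]
    have := i.isLt
    split_ifs <;> omega

lemma bSimple_iff {x : BRoot n} : bSimple n x ↔ ∃ i, x = bsimpleRoot n i := by
  constructor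
  · rintro ⟨i, h⟩; exact ⟨i, Subtype.ext h⟩
  · rintro ⟨i, rfl⟩; exact ⟨i, rfl⟩

lemma bFull_iff {A : Finset (BRoot n)} :
    bFullSupport n A ↔ ∀ i : Fin n, ∃ x ∈ A, cv x (i : ℕ) ≠ 0 := by
  constructor
  · intro h i
    obtain ⟨x, hx, c, hc, hci⟩ := h i
    refine ⟨x, hx, ?_⟩
    rw [cv_eq_of_repr hc i]
    exact hci
  · intro h i
    obtain ⟨x, hx, hne⟩ := h i
    exact ⟨x, hx, fun j => cv x (j : ℕ), root_repr x, hne⟩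

end Repr
section Emb
variable {n m : ℕ}

def aEmb (n m : ℕ) (hm : m < n) (r : ARoot m) : BRoot n :=
  ⟨ev n ⟨r.1.1 - 1, by have := r.2; omega⟩ - ev n ⟨r.1.2, by have := r.2; omega⟩,
    Or.inr ⟨_, _, by have := r.2; rw [Fin.lt_def]; simp only [Fin.val_mk]; omega,
      Or.inl rfl⟩⟩

lemma aEmb_val (hm : m < n) (r : ARoot m) :
    (aEmb n m hm r).1 = ev n ⟨r.1.1 - 1, by have := r.2; omega⟩
      - ev n ⟨r.1.2, by have := r.2; omega⟩ := rfl

lemma cv_aEmb (hm : m < n) (r : ARoot m) (j : ℕ) :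
    cv (aEmb n m hm r) j = if r.1.1 - 1 ≤ j ∧ j < r.1.2 then 1 else 0 := by
  rw [cv_of_sub (aEmb_val hm r)]
  simp only [Fin.val_mk]
  have := r.2
  split_ifs <;> omega

lemma aLe_iff (hm : m < n) (r s : ARoot m) :
    aLe m r s ↔ bLe n (aEmb n m hm r) (aEmb n m hm s) := by
  rw [bLe_iff]
  unfold aLe
  have hr := r.2
  have hs := s.2
  constructor
  · intro h j hj
    rw [cv_aEmb, cv_aEmb]
    split_ifs <;> omega
  · intro h
    have h1 := h (r.1.1 - 1) (by omega)
    have h2 := h (r.1.2 - 1) (by omega)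
    rw [cv_aEmb, cv_aEmb] at h1 h2
    split_ifs at h1 h2 <;> omega

lemma aEmb_inj (hm : m < n) : Function.Injective (aEmb n m hm) := by
  intro r s h
  have hc := breq_iff.mp h
  have hr := r.2
  have hs := s.2
  have h1 := hc (r.1.1 - 1) (by omega)
  have h2 := hc (s.1.1 - 1) (by omega)
  have h3 := hc (r.1.2 - 1) (by omega)
  have h4 := hc (s.1.2 - 1) (by omega)
  rw [cv_aEmb, cv_aEmb] at h1 h2 h3 h4
  have heq : r.1.1 = s.1.1 ∧ r.1.2 = s.1.2 := by
    split_ifs at h1 h2 h3 h4 <;> omega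
  exact Subtype.ext (Prod.ext heq.1 heq.2)

def shiftv (n m : ℕ) (v : Fin (n - m - 1) → ℤ) : Fin n → ℤ :=
  fun j => if h : m + 1 ≤ (j : ℕ) then v ⟨(j : ℕ) - (m + 1), by have := j.isLt; omega⟩ else 0

lemma shiftv_ev (hm : m < n) (k : Fin (n - m - 1)) :
    shiftv n m (ev (n - m - 1) k) = ev n ⟨m + 1 + (k : ℕ), by have := k.isLt; omega⟩ := by
  funext j
  unfold shiftv
  have hk := k.isLt
  split
  · rename_i h
    rw [ev, ev, Pi.single_apply, Pi.single_apply]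
    simp only [Fin.ext_iff, Fin.val_mk]
    split_ifs <;> omega
  · rename_i h
    rw [ev, Pi.single_apply, if_neg (by simp only [Fin.ext_iff, Fin.val_mk]; omega)]

lemma shiftv_sub (n m : ℕ) (u v : Fin (n - m - 1) → ℤ) :
    shiftv n m (u - v) = shiftv n m u - shiftv n m v := by
  funext j; by_cases h : m + 1 ≤ (j : ℕ) <;> simp [shiftv, h]

lemma shiftv_add (n m : ℕ) (u v : Fin (n - m - 1) → ℤ) :
    shiftv n m (u + v) = shiftv n m u + shiftv n m v := by
  funext j; by_cases h : m + 1 ≤ (j : ℕ) <;> simp [shiftv, h]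

def bEmb (n m : ℕ) (hm : m < n) (y : BRoot (n - m - 1)) : BRoot n :=
  ⟨shiftv n m y.1, by
    rcases y.2 with ⟨a, ha⟩ | ⟨a, b, hab, ha | ha⟩
    · exact Or.inl ⟨⟨m + 1 + (a : ℕ), by have := a.isLt; omega⟩, by rw [ha, shiftv_ev hm]⟩
    · refine Or.inr ⟨⟨m + 1 + (a : ℕ), by have := a.isLt; omega⟩,
        ⟨m + 1 + (b : ℕ), by have := b.isLt; omega⟩, ?_, Or.inl ?_⟩
      · have hab' : (a : ℕ) < (b : ℕ) := hab
        rw [Fin.lt_def]; simp only [Fin.val_mk]; omega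
      · rw [ha, shiftv_sub, shiftv_ev hm, shiftv_ev hm]
    · refine Or.inr ⟨⟨m + 1 + (a : ℕ), by have := a.isLt; omega⟩,
        ⟨m + 1 + (b : ℕ), by have := b.isLt; omega⟩, ?_, Or.inr ?_⟩
      · have hab' : (a : ℕ) < (b : ℕ) := hab
        rw [Fin.lt_def]; simp only [Fin.val_mk]; omega
      · rw [ha, shiftv_add, shiftv_ev hm, shiftv_ev hm]⟩

lemma vext_shiftv (v : Fin (n - m - 1) → ℤ) (k : ℕ) :
    vext n (shiftv n m v) k
      = if m + 1 ≤ k ∧ k < n then vext (n - m - 1) v (k - (m + 1)) else 0 := by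
  unfold vext shiftv
  by_cases h1 : k < n
  · rw [dif_pos h1]
    by_cases h2 : m + 1 ≤ k
    · rw [if_pos ⟨h2, h1⟩, dif_pos (show m + 1 ≤ ((⟨k, h1⟩ : Fin n) : ℕ) from h2),
        dif_pos (by omega)]
    · rw [if_neg (by omega), dif_neg (show ¬ m + 1 ≤ ((⟨k, h1⟩ : Fin n) : ℕ) from h2)]
  · rw [dif_neg h1, if_neg (by omega)]

lemma cw_shiftv (v : Fin (n - m - 1) → ℤ) (j : ℕ) (hj : j < n) :
    cw n (shiftv n m v) j = if m + 1 ≤ j then cw (n - m - 1) v (j - (m + 1)) else 0 := by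
  induction j with
  | zero =>
    unfold cw
    rw [Finset.sum_range_one, vext_shiftv, if_neg (by omega), if_neg (by omega)]
  | succ j ih =>
    unfold cw at ih ⊢
    rw [Finset.sum_range_succ, ih (by omega), vext_shiftv]
    by_cases h1 : m + 1 ≤ j
    · rw [if_pos h1, if_pos (by omega), if_pos (by omega)]
      have he : j + 1 - (m + 1) = (j - (m + 1)) + 1 := by omega
      rw [he]
      conv_rhs => rw [Finset.sum_range_succ]
    · by_cases h2 : m + 1 ≤ j + 1
      · rw [if_neg h1, if_pos (by omega), if_pos h2, zero_add]
        have he : j + 1 - (m + 1) = 0 := by omega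
        rw [he, Finset.sum_range_one]
      · rw [if_neg h1, if_neg (by omega), if_neg h2, add_zero]

lemma cv_bEmb (hm : m < n) (y : BRoot (n - m - 1)) (j : ℕ) (hj : j < n) :
    cv (bEmb n m hm y) j = if m + 1 ≤ j then cv y (j - (m + 1)) else 0 :=
  cw_shiftv y.1 j hj

lemma bEmb_bLe_iff (hm : m < n) (y z : BRoot (n - m - 1)) :
    bLe (n - m - 1) y z ↔ bLe n (bEmb n m hm y) (bEmb n m hm z) := by
  rw [bLe_iff, bLe_iff]
  constructor
  · intro h j hj
    rw [cv_bEmb hm y j hj, cv_bEmb hm z j hj]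
    by_cases h1 : m + 1 ≤ j
    · rw [if_pos h1, if_pos h1]
      exact h _ (by omega)
    · rw [if_neg h1, if_neg h1]
  · intro h j hj
    have h2 := h (m + 1 + j) (by omega)
    rw [cv_bEmb hm y _ (by omega), cv_bEmb hm z _ (by omega),
      if_pos (by omega), if_pos (by omega)] at h2
    have h3 : m + 1 + j - (m + 1) = j := by omega
    rwa [h3] at h2

lemma bEmb_inj (hm : m < n) : Function.Injective (bEmb n m hm) := by
  intro y z h
  have hc := breq_iff.mp h
  apply breq_iff.mpr
  intro j hj
  have h2 := hc (m + 1 + j) (by omega)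
  rw [cv_bEmb hm y _ (by omega), cv_bEmb hm z _ (by omega),
    if_pos (by omega), if_pos (by omega)] at h2
  have h3 : m + 1 + j - (m + 1) = j := by omega
  rwa [h3] at h2

end Emb
section Decomp
variable {n : ℕ}

/-- Antichains that break at position `m`, with `ε` recording whether `αₘ ∈ A`. -/
def Cond (n m : ℕ) (ε : Bool) (A : Finset (BRoot n)) : Prop :=
  IsAntichain (bLe n) (A : Set (BRoot n)) ∧
  ∃ hm : m < n,
    (if ε then bsimpleRoot n ⟨m, hm⟩ ∈ A else bsimpleRoot n ⟨m, hm⟩ ∉ A) ∧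
    (∀ x ∈ A, x ≠ bsimpleRoot n ⟨m, hm⟩ → cv x m = 0) ∧
    (∀ j, ∀ _ : j < m, bsimpleRoot n ⟨j, by omega⟩ ∉ A ∧ ∃ x ∈ A, cv x j ≠ 0)

lemma cv_aEmb_mk {m : ℕ} (hm : m < n) (p q : ℕ) (hpq : 1 ≤ p ∧ p ≤ q ∧ q ≤ m) (j : ℕ) :
    cv (aEmb n m hm ⟨(p, q), hpq⟩) j = if p - 1 ≤ j ∧ j < q then 1 else 0 :=
  cv_aEmb hm _ j

lemma root_structure {m : ℕ} (hm : m < n) (x : BRoot n) (h0 : cv x m = 0) :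
    (∃ r : ARoot m, x = aEmb n m hm r) ∨ (∃ y : BRoot (n - m - 1), x = bEmb n m hm y) := by
  rcases x.2 with ⟨a, h⟩ | ⟨a, b, hab, h | h⟩
  · rw [cv_of_ev h] at h0
    have ha : ¬ (a : ℕ) ≤ m := by
      intro hc; rw [if_pos hc] at h0; norm_num at h0
    have han := a.isLt
    right
    obtain ⟨y, hy⟩ : ∃ y : BRoot (n - m - 1),
        y.1 = ev (n - m - 1) ⟨(a : ℕ) - (m + 1), by omega⟩ :=
      ⟨⟨_, Or.inl ⟨_, rfl⟩⟩, rfl⟩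
    refine ⟨y, ?_⟩
    apply breq_iff.mpr
    intro j hj
    rw [cv_of_ev h, cv_bEmb hm y j hj]
    by_cases h1 : m + 1 ≤ j
    · rw [if_pos h1, cv_of_ev hy]
      simp only [Fin.val_mk]
      split_ifs <;> omega
    · rw [if_neg h1, if_neg (by omega)]
  · have hab' : (a : ℕ) < (b : ℕ) := hab
    have han := a.isLt
    have hbn := b.isLt
    rw [cv_of_sub' hab h] at h0
    have hcase : (b : ℕ) ≤ m ∨ m < (a : ℕ) := by
      by_contra hc
      push_neg at hc
      rw [if_pos ⟨by omega, by omega⟩] at h0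
      norm_num at h0
    rcases hcase with hb | ha
    · left
      refine ⟨⟨((a : ℕ) + 1, (b : ℕ)), by omega⟩, ?_⟩
      apply breq_iff.mpr
      intro j hj
      rw [cv_of_sub' hab h, cv_aEmb_mk]
      split_ifs <;> omega
    · right
      have hltM : ((⟨(a : ℕ) - (m + 1), by omega⟩ : Fin (n - m - 1)))
          < (⟨(b : ℕ) - (m + 1), by omega⟩ : Fin (n - m - 1)) := by
        rw [Fin.lt_def]; simp only [Fin.val_mk]; omega
      obtain ⟨y, hy⟩ : ∃ y : BRoot (n - m - 1),
          y.1 = ev (n - m - 1) ⟨(a : ℕ) - (m + 1), by omega⟩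
            - ev (n - m - 1) ⟨(b : ℕ) - (m + 1), by omega⟩ :=
        ⟨⟨_, Or.inr ⟨_, _, hltM, Or.inl rfl⟩⟩, rfl⟩
      refine ⟨y, ?_⟩
      apply breq_iff.mpr
      intro j hj
      rw [cv_of_sub' hab h, cv_bEmb hm y j hj]
      by_cases h1 : m + 1 ≤ j
      · rw [if_pos h1, cv_of_sub' hltM hy]
        simp only [Fin.val_mk]
        split_ifs <;> omega
      · rw [if_neg h1, if_neg (by omega)]
  · have hab' : (a : ℕ) < (b : ℕ) := hab
    have han := a.isLt
    have hbn := b.isLt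
    rw [cv_of_add h] at h0
    have ha : m < (a : ℕ) := by
      by_contra hc
      rw [if_pos (by omega)] at h0
      split_ifs at h0 <;> omega
    right
    have hltM : ((⟨(a : ℕ) - (m + 1), by omega⟩ : Fin (n - m - 1)))
        < (⟨(b : ℕ) - (m + 1), by omega⟩ : Fin (n - m - 1)) := by
      rw [Fin.lt_def]; simp only [Fin.val_mk]; omega
    obtain ⟨y, hy⟩ : ∃ y : BRoot (n - m - 1),
        y.1 = ev (n - m - 1) ⟨(a : ℕ) - (m + 1), by omega⟩
          + ev (n - m - 1) ⟨(b : ℕ) - (m + 1), by omega⟩ :=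
      ⟨⟨_, Or.inr ⟨_, _, hltM, Or.inr rfl⟩⟩, rfl⟩
    refine ⟨y, ?_⟩
    apply breq_iff.mpr
    intro j hj
    rw [cv_of_add h, cv_bEmb hm y j hj]
    by_cases h1 : m + 1 ≤ j
    · rw [if_pos h1, cv_of_add hy]
      simp only [Fin.val_mk]
      split_ifs <;> omega
    · rw [if_neg h1, if_neg (by omega)]
      split_ifs <;> omega

lemma exists_cond {A : Finset (BRoot n)} (hA : IsAntichain (bLe n) (A : Set (BRoot n)))
    (hbad : ¬ ((∀ x ∈ A, ¬ bSimple n x) ∧ bFullSupport n A)) :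
    ∃ m ε, Cond n m ε A := by
  classical
  have hP : ∃ k, ∃ hk : k < n, (bsimpleRoot n ⟨k, hk⟩ ∈ A ∨ ∀ x ∈ A, cv x k = 0) := by
    push_neg at hbad
    by_cases hs : ∀ x ∈ A, ¬ bSimple n x
    · have hnf := hbad hs
      rw [bFull_iff] at hnf
      push_neg at hnf
      obtain ⟨i, hi⟩ := hnf
      exact ⟨(i : ℕ), i.isLt, Or.inr hi⟩
    · push_neg at hs
      obtain ⟨x, hx, hsimp⟩ := hs
      obtain ⟨i, rfl⟩ := bSimple_iff.mp hsimp
      exact ⟨(i : ℕ), i.isLt, Or.inl hx⟩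
  obtain ⟨hk, hdisj⟩ := Nat.find_spec hP
  set k := Nat.find hP with hkdef
  have hmin : ∀ j, j < k → ∀ hj : j < n,
      bsimpleRoot n ⟨j, hj⟩ ∉ A ∧ ∃ x ∈ A, cv x j ≠ 0 := by
    intro j hjk hj
    have hnot := Nat.find_min hP hjk
    push_neg at hnot
    exact hnot hj
  by_cases hmem : bsimpleRoot n ⟨k, hk⟩ ∈ A
  · refine ⟨k, true, hA, hk, by simpa using hmem, ?_, ?_⟩
    · intro x hx hne
      by_contra hcv
      have hpos : 0 < cv x k := lt_of_le_of_ne (cv_nonneg x k) (Ne.symm hcv)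
      have hle : bLe n (bsimpleRoot n ⟨k, hk⟩) x := by
        rw [bLe_iff]
        intro j hj
        rw [cv_bsimpleRoot _ j hj]
        split_ifs with hjk
        · simp only [Fin.val_mk] at hjk
          rw [hjk]; omega
        · exact cv_nonneg x j
      exact hA hmem hx (Ne.symm hne) hle
    · intro j hj
      exact hmin j hj (by omega)
  · refine ⟨k, false, hA, hk, by simpa using hmem, ?_, ?_⟩
    · rcases hdisj with hmem' | hall
      · exact absurd hmem' hmem
      · exact fun x hx _ => hall x hx
    · intro j hj
      exact hmin j hj (by omega)

lemma cond_not_good {m : ℕ} {ε : Bool} {A : Finset (BRoot n)} (h : Cond n m ε A) :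
    ¬ ((∀ x ∈ A, ¬ bSimple n x) ∧ bFullSupport n A) := by
  obtain ⟨hA, hm, hε, hall, hmin⟩ := h
  rintro ⟨hns, hfull⟩
  cases ε
  · simp only [if_neg Bool.false_ne_true] at hε
    obtain ⟨x, hx, hcv⟩ := bFull_iff.mp hfull ⟨m, hm⟩
    exact hcv (hall x hx (fun he => hε (he ▸ hx)))
  · simp only [if_pos rfl] at hε
    exact hns _ hε (bSimple_iff.mpr ⟨_, rfl⟩)

lemma cond_disj {m m' : ℕ} {ε ε' : Bool} {A : Finset (BRoot n)}
    (h : Cond n m ε A) (h' : Cond n m' ε' A) : m = m' ∧ ε = ε' := by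
  obtain ⟨hA, hm, hε, hall, hmin⟩ := h
  obtain ⟨hA', hm', hε', hall', hmin'⟩ := h'
  have hmm : m = m' := by
    by_contra hne
    rcases Nat.lt_or_ge m m' with hlt | hge
    · obtain ⟨hnotmem, x, hx, hcv⟩ := hmin' m hlt
      cases ε
      · simp only [if_neg Bool.false_ne_true] at hε
        exact hcv (hall x hx (fun he => hε (he ▸ hx)))
      · simp only [if_pos rfl] at hε
        exact hnotmem hε
    · have hlt : m' < m := by omega
      obtain ⟨hnotmem, x, hx, hcv⟩ := hmin m' hlt
      cases ε'
      · simp only [if_neg Bool.false_ne_true] at hε'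
        exact hcv (hall' x hx (fun he => hε' (he ▸ hx)))
      · simp only [if_pos rfl] at hε'
        exact hnotmem hε'
  subst hmm
  refine ⟨rfl, ?_⟩
  cases ε <;> cases ε'
  · rfl
  · simp only [if_neg Bool.false_ne_true] at hε
    simp only [if_pos rfl] at hε'
    exact absurd hε' hε
  · simp only [if_pos rfl] at hε
    simp only [if_neg Bool.false_ne_true] at hε'
    exact absurd hε hε'
  · rfl

end Decomp
section Bij
variable {n m : ℕ}

noncomputable def combine (n m : ℕ) (hm : m < n) (ε : Bool)
    (p : Finset (ARoot m) × Finset (BRoot (n - m - 1))) : Finset (BRoot n) :=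
  p.1.image (aEmb n m hm) ∪ p.2.image (bEmb n m hm) ∪
    (if ε then {bsimpleRoot n ⟨m, hm⟩} else ∅)

lemma aEmb_ne_bEmb (hm : m < n) (r : ARoot m) (y : BRoot (n - m - 1)) :
    aEmb n m hm r ≠ bEmb n m hm y := by
  intro h
  have hr := r.2
  have hc := breq_iff.mp h (r.1.1 - 1) (by omega)
  rw [cv_aEmb, cv_bEmb hm _ _ (by omega), if_pos ⟨le_rfl, by omega⟩,
    if_neg (by omega)] at hc
  norm_num at hc

lemma aEmb_ne_simple (hm : m < n) (r : ARoot m) :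
    aEmb n m hm r ≠ bsimpleRoot n ⟨m, hm⟩ := by
  intro h
  have hr := r.2
  have hc := breq_iff.mp h m (by omega)
  rw [cv_aEmb, cv_bsimpleRoot _ _ (by omega), if_neg (by omega), if_pos rfl] at hc
  norm_num at hc

lemma bEmb_ne_simple (hm : m < n) (y : BRoot (n - m - 1)) :
    bEmb n m hm y ≠ bsimpleRoot n ⟨m, hm⟩ := by
  intro h
  have hc := breq_iff.mp h m (by omega)
  rw [cv_bEmb hm _ _ (by omega), cv_bsimpleRoot _ _ (by omega),
    if_neg (by omega), if_pos rfl] at hc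
  norm_num at hc

lemma mem_combine {hm : m < n} {ε : Bool} {A₁ : Finset (ARoot m)}
    {A₂ : Finset (BRoot (n - m - 1))} {x : BRoot n} :
    x ∈ combine n m hm ε (A₁, A₂) ↔
      (∃ r ∈ A₁, aEmb n m hm r = x) ∨ (∃ y ∈ A₂, bEmb n m hm y = x) ∨
        (ε = true ∧ x = bsimpleRoot n ⟨m, hm⟩) := by
  cases ε
  · simp [combine, or_assoc]
  · simp [combine, or_assoc]; exact or_comm.trans or_assoc

lemma combine_card (hm : m < n) (ε : Bool) (A₁ : Finset (ARoot m))
    (A₂ : Finset (BRoot (n - m - 1))) :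
    (combine n m hm ε (A₁, A₂)).card = A₁.card + A₂.card + (if ε then 1 else 0) := by
  classical
  have hd1 : Disjoint (A₁.image (aEmb n m hm)) (A₂.image (bEmb n m hm)) := by
    rw [Finset.disjoint_left]
    intro a ha hb
    obtain ⟨r, _, rfl⟩ := Finset.mem_image.mp ha
    obtain ⟨y, _, hy⟩ := Finset.mem_image.mp hb
    exact aEmb_ne_bEmb hm r y hy.symm
  have hd2 : Disjoint (A₁.image (aEmb n m hm) ∪ A₂.image (bEmb n m hm))
      (if ε then ({bsimpleRoot n ⟨m, hm⟩} : Finset (BRoot n)) else ∅) := by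
    cases ε
    · simp
    · rw [Finset.disjoint_right]
      intro a ha hb
      rw [if_pos rfl, Finset.mem_singleton] at ha
      subst ha
      rcases Finset.mem_union.mp hb with h | h
      · obtain ⟨r, _, hr⟩ := Finset.mem_image.mp h
        exact aEmb_ne_simple hm r hr
      · obtain ⟨y, _, hy⟩ := Finset.mem_image.mp h
        exact bEmb_ne_simple hm y hy
  unfold combine
  rw [Finset.card_union_of_disjoint hd2, Finset.card_union_of_disjoint hd1,
    Finset.card_image_of_injective _ (aEmb_inj hm),
    Finset.card_image_of_injective _ (bEmb_inj hm)]
  cases ε <;> simp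

lemma combine_cond (hm : m < n) (ε : Bool) (A₁ : Finset (ARoot m))
    (A₂ : Finset (BRoot (n - m - 1)))
    (h1 : IsAntichain (aLe m) (A₁ : Set (ARoot m)))
    (h2 : ∀ r ∈ A₁, ¬ aSimple m r)
    (h3 : aFullSupport m A₁)
    (h4 : IsAntichain (bLe (n - m - 1)) (A₂ : Set (BRoot (n - m - 1)))) :
    Cond n m ε (combine n m hm ε (A₁, A₂)) := by
  constructor
  · -- antichain
    intro x hx y hy hxy hle
    rw [Finset.mem_coe, mem_combine] at hx hy
    rcases hx with ⟨r, hr, rfl⟩ | ⟨u, hu, rfl⟩ | ⟨hε, rfl⟩ <;>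
      rcases hy with ⟨s, hs, rfl⟩ | ⟨v, hv, rfl⟩ | ⟨hε', rfl⟩
    · exact h1 hr hs (fun he => hxy (by rw [he])) ((aLe_iff hm r s).mpr hle)
    · have hr2 := r.2
      refine not_bLe (x := aEmb n m hm r) (j := r.1.1 - 1) (by omega) ?_ hle
      rw [cv_aEmb, cv_bEmb hm v _ (by omega), if_pos ⟨le_rfl, by omega⟩, if_neg (by omega)]
      norm_num
    · have hr2 := r.2
      refine not_bLe (x := aEmb n m hm r) (j := r.1.1 - 1) (by omega) ?_ hle
      rw [cv_aEmb, cv_bsimpleRoot _ _ (by omega), if_pos ⟨le_rfl, by omega⟩,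
        if_neg (by simp only [Fin.val_mk]; omega)]
      norm_num
    · obtain ⟨j0, hj0, hne0⟩ := cv_exists u
      have hs2 := s.2
      have he : m + 1 + j0 - (m + 1) = j0 := by omega
      refine not_bLe (x := bEmb n m hm u) (j := m + 1 + j0) (by omega) ?_ hle
      rw [cv_aEmb, cv_bEmb hm u _ (by omega), if_pos (by omega), he, if_neg (by omega)]
      have := cv_nonneg u j0
      omega
    · exact h4 hu hv (fun he => hxy (by rw [he])) ((bEmb_bLe_iff hm u v).mpr hle)
    · obtain ⟨j0, hj0, hne0⟩ := cv_exists u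
      have he : m + 1 + j0 - (m + 1) = j0 := by omega
      refine not_bLe (x := bEmb n m hm u) (j := m + 1 + j0) (by omega) ?_ hle
      rw [cv_bEmb hm u _ (by omega), cv_bsimpleRoot _ _ (by omega), if_pos (by omega), he,
        if_neg (by simp only [Fin.val_mk]; omega)]
      have := cv_nonneg u j0
      omega
    · have hs2 := s.2
      refine not_bLe (j := m) (by omega) ?_ hle
      rw [cv_bsimpleRoot _ _ (by omega), cv_aEmb, if_pos rfl, if_neg (by omega)]
      norm_num
    · refine not_bLe (j := m) (by omega) ?_ hle
      rw [cv_bsimpleRoot _ _ (by omega), cv_bEmb hm v _ (by omega), if_pos rfl,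
        if_neg (by omega)]
      norm_num
    · exact hxy rfl
  refine ⟨hm, ?_, ?_, ?_⟩
  · cases ε
    · simp only [if_neg Bool.false_ne_true]
      intro hmem
      rcases mem_combine.mp hmem with ⟨r, _, hr⟩ | ⟨y, _, hy⟩ | ⟨hf, _⟩
      · exact aEmb_ne_simple hm r hr
      · exact bEmb_ne_simple hm y hy
      · exact Bool.false_ne_true hf
    · simp only [if_pos rfl]
      exact mem_combine.mpr (Or.inr (Or.inr ⟨rfl, rfl⟩))
  · intro x hx hne
    rcases mem_combine.mp hx with ⟨r, _, rfl⟩ | ⟨y, _, rfl⟩ | ⟨_, rfl⟩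
    · have hr2 := r.2
      rw [cv_aEmb, if_neg (by omega)]
    · rw [cv_bEmb hm y _ (by omega), if_neg (by omega)]
    · exact absurd rfl hne
  · intro j hj
    constructor
    · intro hmem
      rcases mem_combine.mp hmem with ⟨r, hr, he⟩ | ⟨y, _, he⟩ | ⟨_, he⟩
      · have hr2 := r.2
        have hc := breq_iff.mp he
        have e1 := hc (r.1.1 - 1) (by omega)
        have e2 := hc (r.1.2 - 1) (by omega)
        rw [cv_aEmb, cv_bsimpleRoot _ _ (by omega)] at e1 e2
        simp only [Fin.val_mk] at e1 e2
        have : r.1.1 = r.1.2 := by split_ifs at e1 e2 <;> omega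
        exact h2 r hr this
      · have hc := breq_iff.mp he j (by omega)
        rw [cv_bEmb hm y _ (by omega), cv_bsimpleRoot _ _ (by omega), if_neg (by omega),
          if_pos (by simp only [Fin.val_mk])] at hc
        norm_num at hc
      · have hc := breq_iff.mp he m (by omega)
        rw [cv_bsimpleRoot _ _ (by omega), cv_bsimpleRoot _ _ (by omega), if_pos rfl,
          if_neg (by simp only [Fin.val_mk]; omega)] at hc
        norm_num at hc
    · obtain ⟨r, hr, hr1, hr2⟩ := h3 (j + 1) (by omega) (by omega)
      refine ⟨aEmb n m hm r, mem_combine.mpr (Or.inl ⟨r, hr, rfl⟩), ?_⟩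
      rw [cv_aEmb, if_pos ⟨by omega, by omega⟩]
      norm_num

end Bij
section Back
variable {n m : ℕ}

lemma cond_cases (hm : m < n) {ε : Bool} {A : Finset (BRoot n)} (h : Cond n m ε A)
    {x : BRoot n} (hx : x ∈ A) :
    (ε = true ∧ x = bsimpleRoot n ⟨m, hm⟩) ∨ (∃ r, x = aEmb n m hm r) ∨
      (∃ y, x = bEmb n m hm y) := by
  obtain ⟨hA, hm', hε, hall, hmin⟩ := h
  by_cases hx0 : cv x m = 0
  · rcases root_structure hm x hx0 with hh | hh
    · exact Or.inr (Or.inl hh)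
    · exact Or.inr (Or.inr hh)
  · left
    have hxm : x = bsimpleRoot n ⟨m, hm⟩ := by
      by_contra hne
      exact hx0 (hall x hx hne)
    refine ⟨?_, hxm⟩
    cases ε
    · exfalso
      simp only [if_neg Bool.false_ne_true] at hε
      exact hε (hxm ▸ hx)
    · rfl

lemma cond_preimage (hm : m < n) {ε : Bool} {A : Finset (BRoot n)} (h : Cond n m ε A) :
    (IsAntichain (aLe m)
        ((A.preimage (aEmb n m hm) (aEmb_inj hm).injOn : Finset (ARoot m)) : Set (ARoot m)) ∧
      (∀ r ∈ A.preimage (aEmb n m hm) (aEmb_inj hm).injOn, ¬ aSimple m r) ∧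
      aFullSupport m (A.preimage (aEmb n m hm) (aEmb_inj hm).injOn)) ∧
    IsAntichain (bLe (n - m - 1))
      ((A.preimage (bEmb n m hm) (bEmb_inj hm).injOn : Finset (BRoot (n - m - 1)))
        : Set (BRoot (n - m - 1))) := by
  have hA := h.1
  obtain ⟨hm', hε, hall, hmin⟩ := h.2
  refine ⟨⟨?_, ?_, ?_⟩, ?_⟩
  · intro r hr s hs hne hle
    rw [Finset.mem_coe, Finset.mem_preimage] at hr hs
    exact hA hr hs (fun he => hne (aEmb_inj hm he)) ((aLe_iff hm r s).mp hle)
  · intro r hr hsimp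
    rw [Finset.mem_preimage] at hr
    have hr2 := r.2
    have hsimp' : r.1.1 = r.1.2 := hsimp
    have heq : aEmb n m hm r = bsimpleRoot n ⟨r.1.1 - 1, by omega⟩ := by
      apply breq_iff.mpr
      intro j hj
      rw [cv_aEmb, cv_bsimpleRoot _ _ hj]
      simp only [Fin.val_mk]
      split_ifs <;> omega
    exact (hmin (r.1.1 - 1) (by omega)).1 (heq ▸ hr)
  · intro mm hmm1 hmm2
    obtain ⟨-, x, hx, hcv⟩ := hmin (mm - 1) (by omega)
    rcases cond_cases hm ⟨hA, hm', hε, hall, hmin⟩ hx with ⟨-, rfl⟩ | ⟨r, rfl⟩ | ⟨y, rfl⟩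
    · exfalso
      apply hcv
      rw [cv_bsimpleRoot _ _ (by omega), if_neg (by simp only [Fin.val_mk]; omega)]
    · have hr2 := r.2
      rw [cv_aEmb] at hcv
      have hcond : r.1.1 - 1 ≤ mm - 1 ∧ mm - 1 < r.1.2 := by
        by_contra hc
        rw [if_neg hc] at hcv
        exact hcv rfl
      exact ⟨r, Finset.mem_preimage.mpr hx, by omega, by omega⟩
    · exfalso
      apply hcv
      rw [cv_bEmb hm y _ (by omega), if_neg (by omega)]
  · intro u hu v hv hne hle
    rw [Finset.mem_coe, Finset.mem_preimage] at hu hv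
    exact hA hu hv (fun he => hne (bEmb_inj hm he)) ((bEmb_bLe_iff hm u v).mp hle)

lemma combine_preimage (hm : m < n) {ε : Bool} {A : Finset (BRoot n)} (h : Cond n m ε A) :
    combine n m hm ε (A.preimage (aEmb n m hm) (aEmb_inj hm).injOn,
      A.preimage (bEmb n m hm) (bEmb_inj hm).injOn) = A := by
  ext x
  rw [mem_combine]
  constructor
  · rintro (⟨r, hr, rfl⟩ | ⟨y, hy, rfl⟩ | ⟨hε', rfl⟩)
    · exact Finset.mem_preimage.mp hr
    · exact Finset.mem_preimage.mp hy
    · obtain ⟨hm', hε, -, -⟩ := h.2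
      subst hε'
      simp only [if_pos rfl] at hε
      exact hε
  · intro hx
    rcases cond_cases hm h hx with ⟨hεt, rfl⟩ | ⟨r, rfl⟩ | ⟨y, rfl⟩
    · exact Or.inr (Or.inr ⟨hεt, rfl⟩)
    · exact Or.inl ⟨r, Finset.mem_preimage.mpr hx, rfl⟩
    · exact Or.inr (Or.inl ⟨y, Finset.mem_preimage.mpr hx, rfl⟩)

lemma preimage_combine (hm : m < n) (ε : Bool) (A₁ : Finset (ARoot m))
    (A₂ : Finset (BRoot (n - m - 1))) :
    ((combine n m hm ε (A₁, A₂)).preimage (aEmb n m hm) (aEmb_inj hm).injOn = A₁ ∧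
     (combine n m hm ε (A₁, A₂)).preimage (bEmb n m hm) (bEmb_inj hm).injOn = A₂) := by
  constructor
  · ext r
    rw [Finset.mem_preimage, mem_combine]
    constructor
    · rintro (⟨s, hs, he⟩ | ⟨y, hy, he⟩ | ⟨-, he⟩)
      · rwa [← aEmb_inj hm he]
      · exact (aEmb_ne_bEmb hm r y he.symm).elim
      · exact (aEmb_ne_simple hm r he).elim
    · intro hr
      exact Or.inl ⟨r, hr, rfl⟩
  · ext y
    rw [Finset.mem_preimage, mem_combine]
    constructor
    · rintro (⟨s, hs, he⟩ | ⟨z, hz, he⟩ | ⟨-, he⟩)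
      · exact (aEmb_ne_bEmb hm s y he).elim
      · rwa [← bEmb_inj hm he]
      · exact (bEmb_ne_simple hm y he).elim
    · intro hy
      exact Or.inr (Or.inl ⟨y, hy, rfl⟩)

end Back
section Final

lemma finsum_filter {γ : Type*} [Fintype γ] (p : γ → Prop) [DecidablePred p] (g : γ → ℕ) :
    ∑ᶠ A ∈ {A : γ | p A}, (X : Polynomial ℚ) ^ g A
      = ∑ A ∈ Finset.univ.filter p, (X : Polynomial ℚ) ^ g A := by
  have h : ({A : γ | p A} : Set γ) = ↑(Finset.univ.filter p) := by
    ext a; simp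
  rw [h, finsum_mem_coe_finset]

lemma CatB_eq (k : ℕ)
    [DecidablePred fun A : Finset (BRoot k) => IsAntichain (bLe k) (A : Set (BRoot k))] :
    CatB k = ∑ A ∈ Finset.univ.filter
        (fun A : Finset (BRoot k) => IsAntichain (bLe k) (A : Set (BRoot k))),
      (X : Polynomial ℚ) ^ A.card := by
  unfold CatB
  exact finsum_filter _ _

lemma CatppB_eq (k : ℕ)
    [DecidablePred fun A : Finset (BRoot k) => IsAntichain (bLe k) (A : Set (BRoot k)) ∧
      (∀ x ∈ A, ¬ bSimple k x) ∧ bFullSupport k A] :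
    CatppB k = ∑ A ∈ Finset.univ.filter
        (fun A : Finset (BRoot k) => IsAntichain (bLe k) (A : Set (BRoot k)) ∧
          (∀ x ∈ A, ¬ bSimple k x) ∧ bFullSupport k A),
      (X : Polynomial ℚ) ^ A.card := by
  unfold CatppB
  exact finsum_filter _ _

lemma CatppA_eq (k : ℕ)
    [DecidablePred fun A : Finset (ARoot k) => IsAntichain (aLe k) (A : Set (ARoot k)) ∧
      (∀ x ∈ A, ¬ aSimple k x) ∧ aFullSupport k A] :
    CatppA k = ∑ A ∈ Finset.univ.filter
        (fun A : Finset (ARoot k) => IsAntichain (aLe k) (A : Set (ARoot k)) ∧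
          (∀ x ∈ A, ¬ aSimple k x) ∧ aFullSupport k A),
      (X : Polynomial ℚ) ^ A.card := by
  unfold CatppA
  exact finsum_filter _ _

lemma sum_cond (n m : ℕ) (hm : m < n) (ε : Bool) [DecidablePred (Cond n m ε)] :
    ∑ A ∈ Finset.univ.filter (Cond n m ε), (X : Polynomial ℚ) ^ A.card
      = (if ε then (X : Polynomial ℚ) else 1) * (CatppA m * CatB (n - m - 1)) := by
  classical
  have hgood : CatppA m * CatB (n - m - 1)
      = ∑ p ∈ (Finset.univ.filter fun A₁ : Finset (ARoot m) =>
            IsAntichain (aLe m) (A₁ : Set (ARoot m)) ∧ (∀ x ∈ A₁, ¬ aSimple m x) ∧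
              aFullSupport m A₁) ×ˢ
          (Finset.univ.filter fun A₂ : Finset (BRoot (n - m - 1)) =>
            IsAntichain (bLe (n - m - 1)) (A₂ : Set (BRoot (n - m - 1)))),
          (X : Polynomial ℚ) ^ (p.1.card + p.2.card) := by
    rw [Finset.sum_product, CatppA_eq, CatB_eq, Finset.sum_mul_sum]
    exact Finset.sum_congr rfl fun A₁ _ => Finset.sum_congr rfl fun A₂ _ =>
      (pow_add _ _ _).symm
  rw [hgood, Finset.mul_sum]
  refine Finset.sum_nbij'
    (i := fun A => (A.preimage (aEmb n m hm) (aEmb_inj hm).injOn,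
      A.preimage (bEmb n m hm) (bEmb_inj hm).injOn))
    (j := fun p => combine n m hm ε p) ?_ ?_ ?_ ?_ ?_
  · intro A hA
    rw [Finset.mem_filter] at hA
    obtain ⟨⟨ha1, ha2, ha3⟩, hb⟩ := cond_preimage hm hA.2
    rw [Finset.mem_product, Finset.mem_filter, Finset.mem_filter]
    exact ⟨⟨Finset.mem_univ _, ha1, ha2, ha3⟩, Finset.mem_univ _, hb⟩
  · intro p hp
    rw [Finset.mem_product, Finset.mem_filter, Finset.mem_filter] at hp
    rw [Finset.mem_filter]
    exact ⟨Finset.mem_univ _, combine_cond hm ε p.1 p.2 hp.1.2.1 hp.1.2.2.1 hp.1.2.2.2 hp.2.2⟩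
  · intro A hA
    rw [Finset.mem_filter] at hA
    exact combine_preimage hm hA.2
  · intro p hp
    exact Prod.ext (preimage_combine hm ε p.1 p.2).1 (preimage_combine hm ε p.1 p.2).2
  · intro A hA
    rw [Finset.mem_filter] at hA
    have hcard : A.card = (A.preimage (aEmb n m hm) (aEmb_inj hm).injOn).card
        + (A.preimage (bEmb n m hm) (bEmb_inj hm).injOn).card + (if ε then 1 else 0) := by
      conv_lhs => rw [← combine_preimage hm hA.2]
      rw [combine_card]
    rw [hcard]
    cases ε
    · show (X : Polynomial ℚ) ^ (_ + _ + 0) = 1 * X ^ (_ + _)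
      rw [Nat.add_zero, one_mul]
    · show (X : Polynomial ℚ) ^ (_ + _ + 1) = X * X ^ (_ + _)
      rw [pow_succ]
      ring

end Final
/-- The identity `Cat(Bₙ; q) = Cat⁺⁺(Bₙ; q) + (1+q)·Σᵢ₌₀ⁿ⁻¹ Cat⁺⁺(Aᵢ; q)·Cat(Bₙ₋ᵢ₋₁; q)`. -/
theorem catB_from_catpp (n : ℕ) :
    CatB n = CatppB n + (1 + X) * ∑ i ∈ Finset.range n, CatppA i * CatB (n - i - 1) := by
  classical
  rw [CatB_eq n, CatppB_eq n]
  have hdisj_tf : ∀ m : ℕ, Disjoint (Finset.univ.filter (Cond n m true))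
      (Finset.univ.filter (Cond n m false)) := by
    intro m
    rw [Finset.disjoint_left]
    intro A hA hA'
    rw [Finset.mem_filter] at hA hA'
    exact Bool.noConfusion (cond_disj hA.2 hA'.2).2
  have hpair : Set.PairwiseDisjoint (↑(Finset.range n) : Set ℕ)
      (fun m => Finset.univ.filter (Cond n m true) ∪ Finset.univ.filter (Cond n m false)) := by
    intro a _ b _ hab
    rw [Function.onFun, Finset.disjoint_left]
    intro A hA hB
    have hca : Cond n a true A ∨ Cond n a false A := by
      rcases Finset.mem_union.mp hA with h | h <;> rw [Finset.mem_filter] at h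
      · exact Or.inl h.2
      · exact Or.inr h.2
    have hcb : Cond n b true A ∨ Cond n b false A := by
      rcases Finset.mem_union.mp hB with h | h <;> rw [Finset.mem_filter] at h
      · exact Or.inl h.2
      · exact Or.inr h.2
    rcases hca with h1 | h1 <;> rcases hcb with h2 | h2 <;>
      exact hab (cond_disj h1 h2).1
  have hTU : Finset.univ.filter
      (fun A : Finset (BRoot n) => IsAntichain (bLe n) (A : Set (BRoot n)))
      = (Finset.univ.filter
          (fun A : Finset (BRoot n) => IsAntichain (bLe n) (A : Set (BRoot n)) ∧
            (∀ x ∈ A, ¬ bSimple n x) ∧ bFullSupport n A)) ∪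
        (Finset.range n).biUnion (fun m =>
          Finset.univ.filter (Cond n m true) ∪ Finset.univ.filter (Cond n m false)) := by
    ext A
    simp only [Finset.mem_filter, Finset.mem_union, Finset.mem_biUnion, Finset.mem_range,
      Finset.mem_univ, true_and]
    constructor
    · intro hA
      by_cases hg : (∀ x ∈ A, ¬ bSimple n x) ∧ bFullSupport n A
      · exact Or.inl ⟨hA, hg.1, hg.2⟩
      · obtain ⟨m, ε, hc⟩ := exists_cond hA hg
        obtain ⟨hm, -⟩ := hc.2
        refine Or.inr ⟨m, hm, ?_⟩
        cases ε
        · exact Or.inr hc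
        · exact Or.inl hc
    · rintro (⟨h1, -, -⟩ | ⟨m, -, hc | hc⟩)
      · exact h1
      · exact hc.1
      · exact hc.1
  have hdisjGU : Disjoint (Finset.univ.filter
      (fun A : Finset (BRoot n) => IsAntichain (bLe n) (A : Set (BRoot n)) ∧
        (∀ x ∈ A, ¬ bSimple n x) ∧ bFullSupport n A))
      ((Finset.range n).biUnion (fun m =>
        Finset.univ.filter (Cond n m true) ∪ Finset.univ.filter (Cond n m false))) := by
    rw [Finset.disjoint_left]
    intro A hGm hUm
    rw [Finset.mem_filter] at hGm
    rw [Finset.mem_biUnion] at hUm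
    obtain ⟨m, -, hU⟩ := hUm
    rcases Finset.mem_union.mp hU with h | h <;> rw [Finset.mem_filter] at h <;>
      exact cond_not_good h.2 ⟨hGm.2.2.1, hGm.2.2.2⟩
  rw [hTU, Finset.sum_union hdisjGU, Finset.sum_biUnion hpair]
  congr 1
  rw [Finset.mul_sum]
  apply Finset.sum_congr rfl
  intro m hm
  have hmn : m < n := Finset.mem_range.mp hm
  rw [Finset.sum_union (hdisj_tf m), sum_cond n m hmn true, sum_cond n m hmn false]
  have h1 : (if (true : Bool) then (X : Polynomial ℚ) else 1) = X := rfl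
  have h2 : (if (false : Bool) then (X : Polynomial ℚ) else 1) = 1 := rfl
  rw [h1, h2]
  ring
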